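/- arXiv:2205.08700 — 2 statements merged into one kernel-verified Lean document; each statement's English description precedes it below -/
import Mathlib

section
/- If A, B, C ∈ 𝔰𝔩(4,ℝ) are skew-symmetric and pairwise-commuting, then the metric induced on 𝔤_{A,B,C} is flat: the curvature R(X,Y)Z := ∇_X(∇_Y Z) − ∇_Y(∇_X Z) − ∇_{[X,Y]}Z vanishes for all X, Y, Z ∈ ℝ⁷. -/
open Matrix

noncomputable section

/-- Standard basis vector `e_{i+1}` of `ℝ⁷` (index `0 ↔ e₁`, …, `6 ↔ e₇`). -/
def E (i : Fin 7) : Fin 7 → ℝ := Pi.single i 1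

/-- The standard inner product on `ℝ⁷` for which `e₁, …, e₇` is orthonormal. -/
def inner7 (X Y : Fin 7 → ℝ) : ℝ := ∑ i, X i * Y i

/-- The component of `X ∈ ℝ⁷` in `𝔫 = span{e₃,e₄,e₅,e₆} ≅ ℝ⁴`. -/
def nPart (X : Fin 7 → ℝ) : Fin 4 → ℝ := fun i => X ⟨i.val + 2, by omega⟩

/-- The inclusion `ℝ⁴ ≅ 𝔫 = span{e₃,e₄,e₅,e₆} ⊆ ℝ⁷`. -/
def emb (w : Fin 4 → ℝ) : Fin 7 → ℝ :=
  fun j => if h : 2 ≤ j.val ∧ j.val ≤ 5 then w ⟨j.val - 2, by omega⟩ else 0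

/-- For `X = λ₁e₁ + λ₂e₂ + λ₇e₇ (+ 𝔫-part)`, the matrix `M_X = λ₁B + λ₂C + λ₇A`. -/
def MX (A B C : Matrix (Fin 4) (Fin 4) ℝ) (X : Fin 7 → ℝ) : Matrix (Fin 4) (Fin 4) ℝ :=
  X 0 • B + X 1 • C + X 6 • A

/-- The bilinear antisymmetric bracket on `ℝ⁷` determined by `[𝔞,𝔞] = 0`, `[𝔫,𝔫] = 0`,
`[e₇,v] = Av`, `[e₁,v] = Bv`, `[e₂,v] = Cv` for `v ∈ 𝔫` and `[v,eₖ] = −[eₖ,v]`,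
where `𝔞 = span{e₁,e₂,e₇}` and `𝔫 = span{e₃,e₄,e₅,e₆}`. -/
def bracket (A B C : Matrix (Fin 4) (Fin 4) ℝ) (X Y : Fin 7 → ℝ) : Fin 7 → ℝ :=
  emb ((MX A B C X).mulVec (nPart Y) - (MX A B C Y).mulVec (nPart X))

/-- The symmetric part `S(M) = (M + Mᵀ)/2` of a matrix. -/
def symPart (M : Matrix (Fin 4) (Fin 4) ℝ) : Matrix (Fin 4) (Fin 4) ℝ :=
  (1/2 : ℝ) • (M + Mᵀ)

/-- The antisymmetric part `A(M) = (M − Mᵀ)/2` of a matrix. -/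
def skewPart (M : Matrix (Fin 4) (Fin 4) ℝ) : Matrix (Fin 4) (Fin 4) ℝ :=
  (1/2 : ℝ) • (M - Mᵀ)

/-- `𝔞 = span{e₁,e₂,e₇} ⊆ ℝ⁷`. -/
def aSub : Submodule ℝ (Fin 7 → ℝ) := Submodule.span ℝ {E 0, E 1, E 6}

/-- `𝔫 = span{e₃,e₄,e₅,e₆} ⊆ ℝ⁷`. -/
def nSub : Submodule ℝ (Fin 7 → ℝ) := Submodule.span ℝ {E 2, E 3, E 4, E 5}

/-- `∇` satisfies the Koszul formula
`⟨∇_X Y, Z⟩ = ½(⟨[X,Y],Z⟩ − ⟨[Y,Z],X⟩ + ⟨[Z,X],Y⟩)`. -/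
def IsKoszul (A B C : Matrix (Fin 4) (Fin 4) ℝ)
    (nabla : (Fin 7 → ℝ) → (Fin 7 → ℝ) → (Fin 7 → ℝ)) : Prop :=
  ∀ X Y Z, inner7 (nabla X Y) Z =
    (1/2 : ℝ) * (inner7 (bracket A B C X Y) Z - inner7 (bracket A B C Y Z) X
      + inner7 (bracket A B C Z X) Y)

/-- The wedge `e^{(i+1)(j+1)(k+1)}` of dual basis elements of `(ℝ⁷)*`, as a 3-form. -/
def w3 (i j k : Fin 7) (X Y Z : Fin 7 → ℝ) : ℝ :=
  Matrix.det !![X i, X j, X k; Y i, Y j, Y k; Z i, Z j, Z k]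

/-- The wedge `e^{(i+1)(j+1)(k+1)(l+1)}` of dual basis elements of `(ℝ⁷)*`, as a 4-form. -/
def w4 (i j k l : Fin 7) (X Y Z W : Fin 7 → ℝ) : ℝ :=
  Matrix.det !![X i, X j, X k, X l; Y i, Y j, Y k, Y l; Z i, Z j, Z k, Z l;
    W i, W j, W k, W l]

/-- The `G₂`-structure 3-form `φ = e¹²⁷ + e³⁴⁷ + e⁵⁶⁷ + e¹³⁵ − e¹⁴⁶ − e²³⁶ − e²⁴⁵`. -/
def phi (X Y Z : Fin 7 → ℝ) : ℝ :=
  w3 0 1 6 X Y Z + w3 2 3 6 X Y Z + w3 4 5 6 X Y Z + w3 0 2 4 X Y Z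
    - w3 0 3 5 X Y Z - w3 1 2 5 X Y Z - w3 1 3 4 X Y Z

/-- The dual 4-form `ψ = e³⁴⁵⁶ + e¹²⁵⁶ + e¹²³⁴ − e²⁴⁶⁷ + e²³⁵⁷ + e¹⁴⁵⁷ + e¹³⁶⁷`. -/
def psi (X Y Z W : Fin 7 → ℝ) : ℝ :=
  w4 2 3 4 5 X Y Z W + w4 0 1 4 5 X Y Z W + w4 0 1 2 3 X Y Z W - w4 1 3 5 6 X Y Z W
    + w4 1 2 4 6 X Y Z W + w4 0 3 4 6 X Y Z W + w4 0 2 5 6 X Y Z W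

/-- `T : ℝ⁷ → ℝ⁷` is a full torsion tensor of `(𝔤_{A,B,C}, φ)`: `∇_X φ = ι_{T(X)} ψ`
for all `X`, where `(∇_X φ)(Y,Z,W) = −φ(∇_X Y,Z,W) − φ(Y,∇_X Z,W) − φ(Y,Z,∇_X W)`
and `(ι_V ψ)(Y,Z,W) = ψ(V,Y,Z,W)`. -/
def IsFullTorsion (nabla : (Fin 7 → ℝ) → (Fin 7 → ℝ) → (Fin 7 → ℝ))
    (T : (Fin 7 → ℝ) → (Fin 7 → ℝ)) : Prop :=
  ∀ X Y Z W, -phi (nabla X Y) Z W - phi Y (nabla X Z) W - phi Y Z (nabla X W)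
    = psi (T X) Y Z W

/-- `T(X,Y) := ⟨T(X),Y⟩`. -/
def Tbil (T : (Fin 7 → ℝ) → (Fin 7 → ℝ)) (X Y : Fin 7 → ℝ) : ℝ := inner7 (T X) Y

/-- The divergence of `T`, determined by
`⟨div T, e_j⟩ = −∑ᵢ T(∇_{e_i}e_i, e_j) − ∑ᵢ T(e_i, ∇_{e_i}e_j)`. -/
def divT (nabla : (Fin 7 → ℝ) → (Fin 7 → ℝ) → (Fin 7 → ℝ))
    (T : (Fin 7 → ℝ) → (Fin 7 → ℝ)) : Fin 7 → ℝ :=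
  fun j => -∑ i, Tbil T (nabla (E i) (E i)) (E j) - ∑ i, Tbil T (E i) (nabla (E i) (E j))

end

noncomputable section

/-- The curvature `R(X,Y)Z = ∇_X(∇_Y Z) − ∇_Y(∇_X Z) − ∇_{[X,Y]}Z`. -/
def curv (A B C : Matrix (Fin 4) (Fin 4) ℝ)
    (nabla : (Fin 7 → ℝ) → (Fin 7 → ℝ) → (Fin 7 → ℝ))
    (X Y Z : Fin 7 → ℝ) : Fin 7 → ℝ :=
  nabla X (nabla Y Z) - nabla Y (nabla X Z) - nabla (bracket A B C X Y) Z

end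

section FlatProof

open Matrix

lemma nPart_emb' (w : Fin 4 → ℝ) : nPart (emb w) = w := by
  funext i; fin_cases i <;> rfl

lemma emb_zero' : emb 0 = 0 := by
  funext j; simp [emb]

lemma inner7_emb' (w : Fin 4 → ℝ) (Z : Fin 7 → ℝ) :
    inner7 (emb w) Z = w ⬝ᵥ nPart Z := by
  have h0 : emb w 0 = 0 := rfl
  have h1 : emb w 1 = 0 := rfl
  have h2 : emb w 2 = w 0 := rfl
  have h3 : emb w 3 = w 1 := rfl
  have h4 : emb w 4 = w 2 := rfl
  have h5 : emb w 5 = w 3 := rfl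
  have h6 : emb w 6 = 0 := rfl
  have n0 : nPart Z 0 = Z 2 := rfl
  have n1 : nPart Z 1 = Z 3 := rfl
  have n2 : nPart Z 2 = Z 4 := rfl
  have n3 : nPart Z 3 = Z 5 := rfl
  simp only [inner7, dotProduct, Fin.sum_univ_seven, Fin.sum_univ_four,
    h0, h1, h2, h3, h4, h5, h6, n0, n1, n2, n3]
  ring

lemma inner7_single' (v : Fin 7 → ℝ) (j : Fin 7) : inner7 v (E j) = v j := by
  simp [inner7, E, Pi.single_apply, mul_ite]

lemma skew_dot {M : Matrix (Fin 4) (Fin 4) ℝ} (hM : Mᵀ = -M) (v w : Fin 4 → ℝ) :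
    (M *ᵥ v) ⬝ᵥ w = -((M *ᵥ w) ⬝ᵥ v) := by
  have key : ∀ a b : Fin 4 → ℝ, (M *ᵥ a) ⬝ᵥ b = a ⬝ᵥ (Mᵀ *ᵥ b) := by
    intro a b
    rw [Matrix.dotProduct_mulVec, Matrix.vecMul_transpose]
  rw [key, hM, Matrix.neg_mulVec, dotProduct_neg, dotProduct_comm]

lemma MX_skew {A B C : Matrix (Fin 4) (Fin 4) ℝ}
    (hA : Aᵀ = -A) (hB : Bᵀ = -B) (hC : Cᵀ = -C) (X : Fin 7 → ℝ) :
    (MX A B C X)ᵀ = -(MX A B C X) := by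
  simp [MX, Matrix.transpose_add, Matrix.transpose_smul, hA, hB, hC, smul_neg]
  abel

lemma MX_emb (A B C : Matrix (Fin 4) (Fin 4) ℝ) (w : Fin 4 → ℝ) :
    MX A B C (emb w) = 0 := by
  have h0 : emb w 0 = 0 := rfl
  have h1 : emb w 1 = 0 := rfl
  have h6 : emb w 6 = 0 := rfl
  simp [MX, h0, h1, h6]

lemma MX_comm {A B C : Matrix (Fin 4) (Fin 4) ℝ}
    (hAB : A * B = B * A) (hAC : A * C = C * A) (hBC : B * C = C * B)
    (X Y : Fin 7 → ℝ) :
    MX A B C X * MX A B C Y = MX A B C Y * MX A B C X := by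
  simp only [MX, add_mul, mul_add, smul_mul_assoc, mul_smul_comm, hAB, hAC, hBC]
  module

lemma nabla_eq {A B C : Matrix (Fin 4) (Fin 4) ℝ}
    (hA : Aᵀ = -A) (hB : Bᵀ = -B) (hC : Cᵀ = -C)
    {nabla : (Fin 7 → ℝ) → (Fin 7 → ℝ) → (Fin 7 → ℝ)}
    (hK : IsKoszul A B C nabla) (X Y : Fin 7 → ℝ) :
    nabla X Y = emb ((MX A B C X) *ᵥ nPart Y) := by
  funext j
  have h := hK X Y (E j)
  rw [show nabla X Y j = inner7 (nabla X Y) (E j) from (inner7_single' _ j).symm, h]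
  rw [show emb ((MX A B C X) *ᵥ nPart Y) j
      = inner7 (emb ((MX A B C X) *ᵥ nPart Y)) (E j) from (inner7_single' _ j).symm]
  set Z := E j with hZ
  simp only [bracket, inner7_emb', sub_dotProduct]
  rw [skew_dot (MX_skew hA hB hC Y) (nPart Z) (nPart X),
      skew_dot (MX_skew hA hB hC X) (nPart Z) (nPart Y),
      skew_dot (MX_skew hA hB hC Z) (nPart Y) (nPart X)]
  ring

theorem flat_of_skewSymmetric' (A B C : Matrix (Fin 4) (Fin 4) ℝ)
    (hA : Aᵀ = -A) (hB : Bᵀ = -B) (hC : Cᵀ = -C)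
    (hAB : A * B = B * A) (hAC : A * C = C * A) (hBC : B * C = C * B)
    (nabla : (Fin 7 → ℝ) → (Fin 7 → ℝ) → (Fin 7 → ℝ))
    (hK : IsKoszul A B C nabla) :
    ∀ X Y Z : Fin 7 → ℝ, curv A B C nabla X Y Z = 0 := by
  intro X Y Z
  have hn := nabla_eq hA hB hC hK
  unfold curv
  rw [hn Y Z, hn X Z, hn X (emb (MX A B C Y *ᵥ nPart Z)),
      hn Y (emb (MX A B C X *ᵥ nPart Z)), hn (bracket A B C X Y) Z]
  rw [nPart_emb', nPart_emb']
  rw [show bracket A B C X Y = emb (MX A B C X *ᵥ nPart Y - MX A B C Y *ᵥ nPart X) from rfl]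
  rw [MX_emb, Matrix.zero_mulVec, emb_zero']
  rw [Matrix.mulVec_mulVec, Matrix.mulVec_mulVec, MX_comm hAB hAC hBC X Y]
  simp

end FlatProof

/-- if A, B, C are skew-symmetric and pairwise-commuting then the
metric induced on `𝔤_{A,B,C}` is flat. -/
theorem flat_of_skewSymmetric (A B C : Matrix (Fin 4) (Fin 4) ℝ)
    (hA : Aᵀ = -A) (hB : Bᵀ = -B) (hC : Cᵀ = -C)
    (hAB : A * B = B * A) (hAC : A * C = C * A) (hBC : B * C = C * B)
    (nabla : (Fin 7 → ℝ) → (Fin 7 → ℝ) → (Fin 7 → ℝ))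
    (hK : IsKoszul A B C nabla) :
    ∀ X Y Z : Fin 7 → ℝ, curv A B C nabla X Y Z = 0 := by
  exact flat_of_skewSymmetric' A B C hA hB hC hAB hAC hBC nabla hK
end

section
/- Let A, B, C ∈ 𝔰𝔩(4,ℝ) be diagonal and traceless (diagonal matrices automatically pairwise commute). Then every full torsion tensor of (𝔤_{A,B,C}, φ), i.e., every linear map T : ℝ⁷ → ℝ⁷ with ∇_X φ = ι_{T(X)}ψ for all X, has divergence zero: div T = 0. -/
set_option maxHeartbeats 1600000


open Matrix

/-- Closed-form expansion of a `4 × 4` determinant. -/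
lemma det_fin_four' (M : Matrix (Fin 4) (Fin 4) ℝ) :
    M.det = M 0 0*M 1 1*M 2 2*M 3 3 - M 0 0*M 1 1*M 2 3*M 3 2 - M 0 0*M 1 2*M 2 1*M 3 3 + M 0 0*M 1 2*M 2 3*M 3 1 + M 0 0*M 1 3*M 2 1*M 3 2 - M 0 0*M 1 3*M 2 2*M 3 1 - M 0 1*M 1 0*M 2 2*M 3 3 + M 0 1*M 1 0*M 2 3*M 3 2 + M 0 1*M 1 2*M 2 0*M 3 3 - M 0 1*M 1 2*M 2 3*M 3 0 - M 0 1*M 1 3*M 2 0*M 3 2 + M 0 1*M 1 3*M 2 2*M 3 0 + M 0 2*M 1 0*M 2 1*M 3 3 - M 0 2*M 1 0*M 2 3*M 3 1 - M 0 2*M 1 1*M 2 0*M 3 3 + M 0 2*M 1 1*M 2 3*M 3 0 + M 0 2*M 1 3*M 2 0*M 3 1 - M 0 2*M 1 3*M 2 1*M 3 0 - M 0 3*M 1 0*M 2 1*M 3 2 + M 0 3*M 1 0*M 2 2*M 3 1 + M 0 3*M 1 1*M 2 0*M 3 2 - M 0 3*M 1 1*M 2 2*M 3 0 - M 0 3*M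 1 2*M 2 0*M 3 1 + M 0 3*M 1 2*M 2 1*M 3 0 := by
  simp [Matrix.det_succ_row_zero, Fin.sum_univ_succ,
    show (Fin.succ 2 : Fin 4) = 3 from rfl, show Fin.succAbove (2:Fin 4) 2 = 3 from rfl,
    show Fin.succAbove (1:Fin 4) 2 = 3 from rfl, show Fin.castSucc (2:Fin 3) = (2:Fin 4) from rfl, show Fin.succAbove (3:Fin 4) 2 = 2 from rfl]
  ring

/-- Closed form of the bracket for diagonal `A`, `B`, `C`. -/
def br (a b c : Fin 4 → ℝ) (X Y : Fin 7 → ℝ) : Fin 7 → ℝ :=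
  ![0, 0,
    (X 0 * b 0 + X 1 * c 0 + X 6 * a 0) * Y 2 - (Y 0 * b 0 + Y 1 * c 0 + Y 6 * a 0) * X 2,
    (X 0 * b 1 + X 1 * c 1 + X 6 * a 1) * Y 3 - (Y 0 * b 1 + Y 1 * c 1 + Y 6 * a 1) * X 3,
    (X 0 * b 2 + X 1 * c 2 + X 6 * a 2) * Y 4 - (Y 0 * b 2 + Y 1 * c 2 + Y 6 * a 2) * X 4,
    (X 0 * b 3 + X 1 * c 3 + X 6 * a 3) * Y 5 - (Y 0 * b 3 + Y 1 * c 3 + Y 6 * a 3) * X 5,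
    0]

/-- Closed form of the Koszul connection for diagonal `A`, `B`, `C`. -/
def nab (a b c : Fin 4 → ℝ) (X Y : Fin 7 → ℝ) : Fin 7 → ℝ :=
  ![b 0 * X 2 * Y 2 + b 1 * X 3 * Y 3 + b 2 * X 4 * Y 4 + b 3 * X 5 * Y 5,
    c 0 * X 2 * Y 2 + c 1 * X 3 * Y 3 + c 2 * X 4 * Y 4 + c 3 * X 5 * Y 5,
    -(a 0 * X 2 * Y 6) - b 0 * X 2 * Y 0 - c 0 * X 2 * Y 1,
    -(a 1 * X 3 * Y 6) - b 1 * X 3 * Y 0 - c 1 * X 3 * Y 1,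
    -(a 2 * X 4 * Y 6) - b 2 * X 4 * Y 0 - c 2 * X 4 * Y 1,
    -(a 3 * X 5 * Y 6) - b 3 * X 5 * Y 0 - c 3 * X 5 * Y 1,
    a 0 * X 2 * Y 2 + a 1 * X 3 * Y 3 + a 2 * X 4 * Y 4 + a 3 * X 5 * Y 5]

/-- Closed form of the full torsion tensor for diagonal `A`, `B`, `C`. -/
def TT (a b c : Fin 4 → ℝ) (X : Fin 7 → ℝ) : Fin 7 → ℝ :=
  ![0, 0,
    -(a 1 * X 3) - b 2 * X 4 + c 3 * X 5,
    a 0 * X 2 + b 3 * X 5 + c 2 * X 4,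
    -(a 3 * X 5) + b 0 * X 2 - c 1 * X 3,
    a 2 * X 4 - b 1 * X 3 - c 0 * X 2,
    0]

section AuxSimp

variable (a b c : Fin 4 → ℝ) (X Y : Fin 7 → ℝ) (w : Fin 4 → ℝ)

@[simp] lemma nPart_app_0 : nPart X 0 = X 2 := rfl
@[simp] lemma nPart_app_1 : nPart X 1 = X 3 := rfl
@[simp] lemma nPart_app_2 : nPart X 2 = X 4 := rfl
@[simp] lemma nPart_app_3 : nPart X 3 = X 5 := rfl
@[simp] lemma emb_app_0 : emb w 0 = 0 := rfl
@[simp] lemma emb_app_1 : emb w 1 = 0 := rfl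
@[simp] lemma emb_app_2 : emb w 2 = w 0 := rfl
@[simp] lemma emb_app_3 : emb w 3 = w 1 := rfl
@[simp] lemma emb_app_4 : emb w 4 = w 2 := rfl
@[simp] lemma emb_app_5 : emb w 5 = w 3 := rfl
@[simp] lemma emb_app_6 : emb w 6 = 0 := rfl
@[simp] lemma br_app_0 : br a b c X Y 0 = (0:ℝ) := rfl
@[simp] lemma br_app_1 : br a b c X Y 1 = (0:ℝ) := rfl
@[simp] lemma br_app_2 : br a b c X Y 2 = (X 0 * b 0 + X 1 * c 0 + X 6 * a 0) * Y 2 - (Y 0 * b 0 + Y 1 * c 0 + Y 6 * a 0) * X 2 := rfl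
@[simp] lemma br_app_3 : br a b c X Y 3 = (X 0 * b 1 + X 1 * c 1 + X 6 * a 1) * Y 3 - (Y 0 * b 1 + Y 1 * c 1 + Y 6 * a 1) * X 3 := rfl
@[simp] lemma br_app_4 : br a b c X Y 4 = (X 0 * b 2 + X 1 * c 2 + X 6 * a 2) * Y 4 - (Y 0 * b 2 + Y 1 * c 2 + Y 6 * a 2) * X 4 := rfl
@[simp] lemma br_app_5 : br a b c X Y 5 = (X 0 * b 3 + X 1 * c 3 + X 6 * a 3) * Y 5 - (Y 0 * b 3 + Y 1 * c 3 + Y 6 * a 3) * X 5 := rfl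
@[simp] lemma br_app_6 : br a b c X Y 6 = (0:ℝ) := rfl
@[simp] lemma nab_app_0 : nab a b c X Y 0 = b 0 * X 2 * Y 2 + b 1 * X 3 * Y 3 + b 2 * X 4 * Y 4 + b 3 * X 5 * Y 5 := rfl
@[simp] lemma nab_app_1 : nab a b c X Y 1 = c 0 * X 2 * Y 2 + c 1 * X 3 * Y 3 + c 2 * X 4 * Y 4 + c 3 * X 5 * Y 5 := rfl
@[simp] lemma nab_app_2 : nab a b c X Y 2 = -(a 0 * X 2 * Y 6) - b 0 * X 2 * Y 0 - c 0 * X 2 * Y 1 := rfl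
@[simp] lemma nab_app_3 : nab a b c X Y 3 = -(a 1 * X 3 * Y 6) - b 1 * X 3 * Y 0 - c 1 * X 3 * Y 1 := rfl
@[simp] lemma nab_app_4 : nab a b c X Y 4 = -(a 2 * X 4 * Y 6) - b 2 * X 4 * Y 0 - c 2 * X 4 * Y 1 := rfl
@[simp] lemma nab_app_5 : nab a b c X Y 5 = -(a 3 * X 5 * Y 6) - b 3 * X 5 * Y 0 - c 3 * X 5 * Y 1 := rfl
@[simp] lemma nab_app_6 : nab a b c X Y 6 = a 0 * X 2 * Y 2 + a 1 * X 3 * Y 3 + a 2 * X 4 * Y 4 + a 3 * X 5 * Y 5 := rfl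
@[simp] lemma TT_app_0 : TT a b c X 0 = (0:ℝ) := rfl
@[simp] lemma TT_app_1 : TT a b c X 1 = (0:ℝ) := rfl
@[simp] lemma TT_app_2 : TT a b c X 2 = -(a 1 * X 3) - b 2 * X 4 + c 3 * X 5 := rfl
@[simp] lemma TT_app_3 : TT a b c X 3 = a 0 * X 2 + b 3 * X 5 + c 2 * X 4 := rfl
@[simp] lemma TT_app_4 : TT a b c X 4 = -(a 3 * X 5) + b 0 * X 2 - c 1 * X 3 := rfl
@[simp] lemma TT_app_5 : TT a b c X 5 = a 2 * X 4 - b 1 * X 3 - c 0 * X 2 := rfl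
@[simp] lemma TT_app_6 : TT a b c X 6 = (0:ℝ) := rfl

lemma fin7_mk_0 (h : (0:ℕ) < 7) : (⟨0, h⟩ : Fin 7) = 0 := rfl
lemma fin7_mk_1 (h : (1:ℕ) < 7) : (⟨1, h⟩ : Fin 7) = 1 := rfl
lemma fin7_mk_2 (h : (2:ℕ) < 7) : (⟨2, h⟩ : Fin 7) = 2 := rfl
lemma fin7_mk_3 (h : (3:ℕ) < 7) : (⟨3, h⟩ : Fin 7) = 3 := rfl
lemma fin7_mk_4 (h : (4:ℕ) < 7) : (⟨4, h⟩ : Fin 7) = 4 := rfl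
lemma fin7_mk_5 (h : (5:ℕ) < 7) : (⟨5, h⟩ : Fin 7) = 5 := rfl
lemma fin7_mk_6 (h : (6:ℕ) < 7) : (⟨6, h⟩ : Fin 7) = 6 := rfl
lemma fin4_mk_0 (h : (0:ℕ) < 4) : (⟨0, h⟩ : Fin 4) = 0 := rfl
lemma fin4_mk_1 (h : (1:ℕ) < 4) : (⟨1, h⟩ : Fin 4) = 1 := rfl
lemma fin4_mk_2 (h : (2:ℕ) < 4) : (⟨2, h⟩ : Fin 4) = 2 := rfl
lemma fin4_mk_3 (h : (3:ℕ) < 4) : (⟨3, h⟩ : Fin 4) = 3 := rfl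

end AuxSimp

/-- for diagonal traceless A, B, C, every full torsion tensor of
`(𝔤_{A,B,C}, φ)` is divergence-free. -/
theorem divT_eq_zero_of_diagonal (A B C : Matrix (Fin 4) (Fin 4) ℝ)
    (hA : A.IsDiag) (hB : B.IsDiag) (hC : C.IsDiag)
    (htA : Matrix.trace A = 0) (htB : Matrix.trace B = 0) (htC : Matrix.trace C = 0)
    (nabla : (Fin 7 → ℝ) → (Fin 7 → ℝ) → (Fin 7 → ℝ))
    (hK : IsKoszul A B C nabla)
    (T : (Fin 7 → ℝ) → (Fin 7 → ℝ)) (hT : IsFullTorsion nabla T) :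
    divT nabla T = 0 := by
  have hcomp : ∀ (v : Fin 7 → ℝ) (k : Fin 7), inner7 v (E k) = v k := by
    intro v k; simp [inner7, E, Pi.single_apply]
  have hAe : Matrix.diagonal A.diag = A := hA.diagonal_diag
  have hBe : Matrix.diagonal B.diag = B := hB.diagonal_diag
  have hCe : Matrix.diagonal C.diag = C := hC.diagonal_diag
  have hbr : ∀ X Y : Fin 7 → ℝ, bracket A B C X Y = br A.diag B.diag C.diag X Y := by
    intro X Y
    rw [← hAe, ← hBe, ← hCe]
    funext k
    fin_cases k <;>
      simp [bracket, MX, Matrix.add_mulVec, Matrix.smul_mulVec,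
        Matrix.mulVec_diagonal, Matrix.diag] <;> ring
  have hnabla : ∀ X Y : Fin 7 → ℝ, nabla X Y = nab A.diag B.diag C.diag X Y := by
    intro X Y
    funext k
    have h := hK X Y (E k)
    rw [hcomp, hbr, hbr, hbr] at h
    rw [h]
    fin_cases k <;>
      simp [inner7, Fin.sum_univ_seven, E, Pi.single_apply, fin7_mk_0, fin7_mk_1, fin7_mk_2, fin7_mk_3, fin7_mk_4, fin7_mk_5, fin7_mk_6, fin4_mk_0, fin4_mk_1, fin4_mk_2, fin4_mk_3] <;> ring
  have hpsi0 : ∀ V : Fin 7 → ℝ, psi V (E 1) (E 2) (E 3) = V 0 := by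
    intro V; simp [psi, w4, det_fin_four', E, Pi.single_apply, Matrix.vecHead, Matrix.vecTail]
  have hpsi1 : ∀ V : Fin 7 → ℝ, psi V (E 0) (E 2) (E 3) = -V 1 := by
    intro V; simp [psi, w4, det_fin_four', E, Pi.single_apply, Matrix.vecHead, Matrix.vecTail]
  have hpsi2 : ∀ V : Fin 7 → ℝ, psi V (E 0) (E 1) (E 3) = V 2 := by
    intro V; simp [psi, w4, det_fin_four', E, Pi.single_apply, Matrix.vecHead, Matrix.vecTail]
  have hpsi3 : ∀ V : Fin 7 → ℝ, psi V (E 0) (E 1) (E 2) = -V 3 := by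
    intro V; simp [psi, w4, det_fin_four', E, Pi.single_apply, Matrix.vecHead, Matrix.vecTail]
  have hpsi4 : ∀ V : Fin 7 → ℝ, psi V (E 0) (E 1) (E 5) = V 4 := by
    intro V; simp [psi, w4, det_fin_four', E, Pi.single_apply, Matrix.vecHead, Matrix.vecTail]
  have hpsi5 : ∀ V : Fin 7 → ℝ, psi V (E 0) (E 1) (E 4) = -V 5 := by
    intro V; simp [psi, w4, det_fin_four', E, Pi.single_apply, Matrix.vecHead, Matrix.vecTail]
  have hpsi6 : ∀ V : Fin 7 → ℝ, psi V (E 0) (E 2) (E 5) = -V 6 := by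
    intro V; simp [psi, w4, det_fin_four', E, Pi.single_apply, Matrix.vecHead, Matrix.vecTail]
  have hTX : ∀ X : Fin 7 → ℝ, T X = TT A.diag B.diag C.diag X := by
    intro X
    have e0 : T X 0 = TT A.diag B.diag C.diag X 0 := by
      have h := hT X (E 1) (E 2) (E 3)
      rw [hnabla, hnabla, hnabla, hpsi0] at h
      rw [← h]
      simp [phi, w3, E, Matrix.det_fin_three, Pi.single_apply, Matrix.vecHead, Matrix.vecTail]
    have e1 : T X 1 = TT A.diag B.diag C.diag X 1 := by
      have h := hT X (E 0) (E 2) (E 3)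
      rw [hnabla, hnabla, hnabla, hpsi1] at h
      rw [show T X 1 = -(-(T X 1)) by ring, ← h]
      simp [phi, w3, E, Matrix.det_fin_three, Pi.single_apply, Matrix.vecHead, Matrix.vecTail]
    have e2 : T X 2 = TT A.diag B.diag C.diag X 2 := by
      have h := hT X (E 0) (E 1) (E 3)
      rw [hnabla, hnabla, hnabla, hpsi2] at h
      rw [← h]
      simp [phi, w3, E, Matrix.det_fin_three, Pi.single_apply, Matrix.vecHead, Matrix.vecTail]; ring
    have e3 : T X 3 = TT A.diag B.diag C.diag X 3 := by
      have h := hT X (E 0) (E 1) (E 2)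
      rw [hnabla, hnabla, hnabla, hpsi3] at h
      rw [show T X 3 = -(-(T X 3)) by ring, ← h]
      simp [phi, w3, E, Matrix.det_fin_three, Pi.single_apply, Matrix.vecHead, Matrix.vecTail]; ring
    have e4 : T X 4 = TT A.diag B.diag C.diag X 4 := by
      have h := hT X (E 0) (E 1) (E 5)
      rw [hnabla, hnabla, hnabla, hpsi4] at h
      rw [← h]
      simp [phi, w3, E, Matrix.det_fin_three, Pi.single_apply, Matrix.vecHead, Matrix.vecTail]; ring
    have e5 : T X 5 = TT A.diag B.diag C.diag X 5 := by
      have h := hT X (E 0) (E 1) (E 4)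
      rw [hnabla, hnabla, hnabla, hpsi5] at h
      rw [show T X 5 = -(-(T X 5)) by ring, ← h]
      simp [phi, w3, E, Matrix.det_fin_three, Pi.single_apply, Matrix.vecHead, Matrix.vecTail]; ring
    have e6 : T X 6 = TT A.diag B.diag C.diag X 6 := by
      have h := hT X (E 0) (E 2) (E 5)
      rw [hnabla, hnabla, hnabla, hpsi6] at h
      rw [show T X 6 = -(-(T X 6)) by ring, ← h]
      simp [phi, w3, E, Matrix.det_fin_three, Pi.single_apply, Matrix.vecHead, Matrix.vecTail]
    funext m
    fin_cases m
    exacts [e0, e1, e2, e3, e4, e5, e6]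
  have hTb : ∀ X Y, Tbil T X Y = inner7 (TT A.diag B.diag C.diag X) Y := by
    intro X Y; rw [Tbil, hTX]
  funext j
  simp only [divT, Fin.sum_univ_seven, hTb, hnabla, Pi.zero_apply]
  fin_cases j <;>
    simp [inner7, Fin.sum_univ_seven, E, Pi.single_apply, fin7_mk_0, fin7_mk_1, fin7_mk_2, fin7_mk_3, fin7_mk_4, fin7_mk_5, fin7_mk_6, fin4_mk_0, fin4_mk_1, fin4_mk_2, fin4_mk_3] <;> ring
end
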